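/- For a udKdV solution with V^t > 1, max_i X^t_i = 1 + max_i Y^{t+1}_i, where X^t_i = ∑_{j≥i}(U^{t+1}_j − U^{t−1}_j) and Y^{t+1}_i = ∑_{j>i} U^{t+1}_j − ∑_{j≥i} U^t_j. Combined with max_i X^t_i = 1 + max_i Y^t_i, this implies max_i Y^t_i and max_i X^t_i are independent of t. -/

import Mathlib

open Set Function

namespace Stmt8
section Helpers
lemma exists_max (f : ℤ → ℝ) (N : ℤ) (hN : 0 < N) (h : ∀ i, i < -N ∨ N < i → f i = 0) :
    ∃ i0, ∀ i, f i ≤ f i0 := by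
  obtain ⟨i0, hi0mem, hi0⟩ := Finset.exists_max_image (Finset.Icc (-N-1) (N+1)) f
    ⟨N+1, by simp; omega⟩
  refine ⟨i0, fun i => ?_⟩
  by_cases hi : i ∈ Finset.Icc (-N-1) (N+1)
  · exact hi0 i hi
  · have h1 : f i = 0 := h i (by simp at hi ⊢; omega)
    have h2 : f (N+1) = 0 := h _ (by omega)
    have h3 : f (N+1) ≤ f i0 := hi0 _ (by simp; omega)
    rw [h1, ← h2]; exact h3

lemma ciSup_eq_max (f : ℤ → ℝ) (i0 : ℤ) (h : ∀ i, f i ≤ f i0) : (⨆ i, f i) = f i0 :=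
  le_antisymm (ciSup_le h) (le_ciSup ⟨f i0, by rintro _ ⟨i, rfl⟩; exact h i⟩ i0)

lemma iSup_range_congr (f g : ℤ → ℝ) (h : Set.range f = Set.range g) :
    (⨆ i, f i) = ⨆ i, g i := congrArg sSup h

variable {g h : ℤ → ℝ}

lemma sum_Iio_succ (hg : (support g).Finite) (i : ℤ) :
    ∑ᶠ j ∈ Iio (i+1), g j = (∑ᶠ j ∈ Iio i, g j) + g i := by
  have hs : Iio (i+1) = Iio i ∪ {i} := by ext x; simp; try omega
  rw [hs, finsum_mem_union' (by simp) (hg.inter_of_right _) ((finite_singleton i).inter_of_left _),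
    finsum_mem_singleton]

lemma sum_Ioi_succ (hg : (support g).Finite) (i : ℤ) :
    ∑ᶠ j ∈ Ioi i, g j = (∑ᶠ j ∈ Ioi (i+1), g j) + g (i+1) := by
  have hs : Ioi i = Ioi (i+1) ∪ {i+1} := by ext x; simp; try omega
  rw [hs, finsum_mem_union' (by simp) (hg.inter_of_right _)
    ((finite_singleton (i+1)).inter_of_left _), finsum_mem_singleton]

lemma sum_split (hg : (support g).Finite) (i : ℤ) :
    (∑ᶠ j ∈ Iio i, g j) + ∑ᶠ j ∈ Ici i, g j = ∑ᶠ j, g j := by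
  rw [← finsum_mem_univ g, ← Iio_union_Ici (a := i),
    finsum_mem_union' (by simp [disjoint_left]) (hg.inter_of_right _) (hg.inter_of_right _)]

lemma sum_Ici_eq (hg : (support g).Finite) (i : ℤ) :
    ∑ᶠ j ∈ Ici i, g j = g i + ∑ᶠ j ∈ Ioi i, g j := by
  have hs : Ici i = {i} ∪ Ioi i := by ext x; simp; try omega
  rw [hs, finsum_mem_union' (by simp) ((finite_singleton i).inter_of_left _)
    (hg.inter_of_right _), finsum_mem_singleton]

lemma sum_Iio_zero (i : ℤ) (h : ∀ j, j < i → g j = 0) : ∑ᶠ j ∈ Iio i, g j = 0 :=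
  finsum_mem_of_eqOn_zero fun j hj => h j hj

lemma sum_Ioi_zero (i : ℤ) (h : ∀ j, i < j → g j = 0) : ∑ᶠ j ∈ Ioi i, g j = 0 :=
  finsum_mem_of_eqOn_zero fun j hj => h j hj

lemma sum_Ici_zero (i : ℤ) (h : ∀ j, i ≤ j → g j = 0) : ∑ᶠ j ∈ Ici i, g j = 0 :=
  finsum_mem_of_eqOn_zero fun j hj => h j hj

lemma support_sub (hg : (support g).Finite) (hh : (support h).Finite) :
    (support fun j => g j - h j).Finite := by
  refine (hg.union hh).subset fun x hx => ?_
  simp only [mem_support, Set.mem_union] at hx ⊢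
  by_contra hc; push_neg at hc
  exact hx (by rw [hc.1, hc.2, sub_zero])

lemma sum_sub (hg : (support g).Finite) (hh : (support h).Finite) (s : Set ℤ) :
    ∑ᶠ j ∈ s, (g j - h j) = (∑ᶠ j ∈ s, g j) - ∑ᶠ j ∈ s, h j := by
  have h1 : ∑ᶠ j ∈ s, ((g j - h j) + h j) = (∑ᶠ j ∈ s, (g j - h j)) + ∑ᶠ j ∈ s, h j :=
    finsum_mem_add_distrib' ((support_sub hg hh).inter_of_right _) (hh.inter_of_right _)
  simp only [sub_add_cancel] at h1
  linarith

lemma sub_min' (x u v : ℝ) : x - min u v = max (x - u) (x - v) := by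
  rcases le_total u v with h | h
  · rw [min_eq_left h, max_eq_left (by linarith)]
  · rw [min_eq_right h, max_eq_right (by linarith)]

lemma support_neg_comp (f : ℤ → ℝ) (hf : (support f).Finite) :
    (support fun k : ℤ => f (-k)).Finite := by
  have he : (support fun k : ℤ => f (-k)) = Neg.neg ⁻¹' support f := rfl
  rw [he]
  exact Set.Finite.preimage (fun x _ y _ hxy => by omega) hf

lemma exists_window (a b c : ℤ → ℝ) (ha : (support a).Finite) (hb : (support b).Finite)
    (hc : (support c).Finite) :
    ∃ N : ℤ, 0 < N ∧ ∀ j : ℤ, j ≤ -N ∨ N ≤ j → a j = 0 ∧ b j = 0 ∧ c j = 0 := by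
  have hf := (ha.union hb).union hc
  obtain ⟨M, hM⟩ := hf.bddAbove
  obtain ⟨m, hm⟩ := hf.bddBelow
  refine ⟨max (|M| + |m|) 0 + 1, by positivity, fun j hj => ?_⟩
  by_contra hcon
  have hmem : j ∈ support a ∪ support b ∪ support c := by
    simp only [Set.mem_union, mem_support]; tauto
  have h1 : j ≤ M := hM hmem
  have h2 : m ≤ j := hm hmem
  have h3 : M ≤ |M| := le_abs_self M
  have h4 : -|m| ≤ m := neg_abs_le m
  have h5 : |M| + |m| ≤ max (|M| + |m|) 0 := le_max_left _ _
  have h6 : (0:ℤ) ≤ |M| := abs_nonneg M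
  have h7 : (0:ℤ) ≤ |m| := abs_nonneg m
  omega
end Helpers

theorem massb (a b : ℤ → ℝ) (ha : (support a).Finite) (hb : (support b).Finite)
    (hub : ∀ i, b i = min (1 - a i) (∑ᶠ j ∈ Set.Iio i, (a j - b j))) :
    ∑ᶠ j, b j = ∑ᶠ j, a j := by
  obtain ⟨N, hNpos, hw⟩ := exists_window a b b ha hb hb
  have hsab := support_sub ha hb
  have hCtot : (∑ᶠ j ∈ Iio N, (a j - b j)) = (∑ᶠ j, a j) - ∑ᶠ j, b j := by
    have h1 := sum_split hsab N
    have h2 : ∑ᶠ j ∈ Ici N, (a j - b j) = 0 :=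
      sum_Ici_zero N fun j hj => by
        have := hw j (by omega); rw [this.1, this.2.1, sub_zero]
    have h3 : ∑ᶠ j, (a j - b j) = (∑ᶠ j, a j) - ∑ᶠ j, b j := finsum_sub_distrib ha hb
    linarith
  have h1 := hub N
  rw [(hw N (by omega)).2.1, (hw N (by omega)).1, hCtot] at h1
  rcases min_cases (1 - (0:ℝ)) ((∑ᶠ j, a j) - ∑ᶠ j, b j) with hcs | hcs <;>
    rw [hcs.1] at h1 <;> [linarith; linarith [hcs.2]]

theorem massc (a c : ℤ → ℝ) (ha : (support a).Finite) (hc : (support c).Finite)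
    (hdc : ∀ i, c i = min (1 - a i) (∑ᶠ j ∈ Set.Ioi i, (a j - c j))) :
    ∑ᶠ j, c j = ∑ᶠ j, a j := by
  obtain ⟨N, hNpos, hw⟩ := exists_window a c c ha hc hc
  have hsac := support_sub ha hc
  have hDtot : (∑ᶠ j ∈ Ioi (-N), (a j - c j)) = (∑ᶠ j, a j) - ∑ᶠ j, c j := by
    have hset : Ioi (-N) = Ici (-N+1) := by ext x; simp
    have h1 := sum_split hsac (-N+1)
    have h2 : ∑ᶠ j ∈ Iio (-N+1), (a j - c j) = 0 :=
      sum_Iio_zero _ fun j hj => by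
        have := hw j (by omega); rw [this.1, this.2.1, sub_zero]
    have h3 : ∑ᶠ j, (a j - c j) = (∑ᶠ j, a j) - ∑ᶠ j, c j := finsum_sub_distrib ha hc
    rw [hset]; linarith
  have h1 := hdc (-N)
  rw [(hw (-N) (by omega)).2.1, (hw (-N) (by omega)).1, hDtot] at h1
  rcases min_cases (1 - (0:ℝ)) ((∑ᶠ j, a j) - ∑ᶠ j, c j) with hcs | hcs <;>
    rw [hcs.1] at h1 <;> [linarith; linarith [hcs.2]]

theorem master (a b c : ℤ → ℝ) (ha : (support a).Finite) (hb : (support b).Finite)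
    (hc : (support c).Finite)
    (hub : ∀ i, b i = min (1 - a i) (∑ᶠ j ∈ Set.Iio i, (a j - b j)))
    (hdc : ∀ i, c i = min (1 - a i) (∑ᶠ j ∈ Set.Ioi i, (a j - c j))) :
    ((∃ i, 0 < (∑ᶠ j ∈ Set.Ioi i, a j) - ∑ᶠ j ∈ Set.Ici i, c j) ↔
        1 < ⨆ i : ℤ, (a i + a (i+1))) ∧
    ((∃ i, 0 < (∑ᶠ j ∈ Set.Ioi i, b j) - ∑ᶠ j ∈ Set.Ici i, a j) ↔
        1 < ⨆ i : ℤ, (a i + a (i+1))) ∧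
    (1 < (⨆ i : ℤ, (a i + a (i+1))) →
      (⨆ i : ℤ, ∑ᶠ j ∈ Set.Ici i, (b j - c j)) =
        1 + ⨆ i : ℤ, ((∑ᶠ j ∈ Set.Ioi i, b j) - ∑ᶠ j ∈ Set.Ici i, a j)) := by
  obtain ⟨N, hNpos, hw⟩ := exists_window a b c ha hb hc
  obtain ⟨C, hCdef⟩ : ∃ C : ℤ → ℝ, ∀ i, C i = ∑ᶠ j ∈ Iio i, (a j - b j) := ⟨_, fun _ => rfl⟩
  obtain ⟨D, hDdef⟩ : ∃ D : ℤ → ℝ, ∀ i, D i = ∑ᶠ j ∈ Ioi i, (a j - c j) := ⟨_, fun _ => rfl⟩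
  have hsab := support_sub ha hb
  have hsac := support_sub ha hc
  have hmb := massb a b ha hb hub
  have hmc := massc a c ha hc hdc
  have hbi : ∀ i, b i = min (1 - a i) (C i) := fun i => by rw [hCdef]; exact hub i
  have hci : ∀ i, c i = min (1 - a i) (D i) := fun i => by rw [hDdef]; exact hdc i
  have hCrec : ∀ i, C (i+1) = C i + (a i - b i) := fun i => by
    rw [hCdef, hCdef]; exact sum_Iio_succ hsab i
  have hDrec : ∀ i, D i = D (i+1) + (a (i+1) - c (i+1)) := fun i => by
    rw [hDdef, hDdef]; exact sum_Ioi_succ hsac i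
  have hC0 : ∀ i, i ≤ -N → C i = 0 := fun i hi => by
    rw [hCdef]
    exact sum_Iio_zero i fun j hj => by
      have := hw j (by omega); rw [this.1, this.2.1, sub_zero]
  have hCN : ∀ i, N ≤ i → C i = 0 := fun i hi => by
    rw [hCdef]
    have h1 := sum_split hsab i
    have h2 : ∑ᶠ j ∈ Ici i, (a j - b j) = 0 :=
      sum_Ici_zero i fun j hj => by
        have := hw j (by omega); rw [this.1, this.2.1, sub_zero]
    have h3 : ∑ᶠ j, (a j - b j) = (∑ᶠ j, a j) - ∑ᶠ j, b j := finsum_sub_distrib ha hb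
    rw [hmb] at h3
    linarith
  have hDhigh : ∀ i, N ≤ i → D i = 0 := fun i hi => by
    rw [hDdef]
    exact sum_Ioi_zero i fun j hj => by
      have := hw j (by omega); rw [this.1, this.2.2, sub_zero]
  have hD0 : ∀ i, i ≤ -N → D i = 0 := fun i hi => by
    rw [hDdef]
    have hset : Ioi i = Ici (i+1) := by ext x; simp
    have h1 := sum_split hsac (i+1)
    have h2 : ∑ᶠ j ∈ Iio (i+1), (a j - c j) = 0 :=
      sum_Iio_zero _ fun j hj => by
        have := hw j (by omega); rw [this.1, this.2.2, sub_zero]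
    have h3 : ∑ᶠ j, (a j - c j) = (∑ᶠ j, a j) - ∑ᶠ j, c j := finsum_sub_distrib ha hc
    rw [hmc] at h3
    rw [hset]; linarith
  obtain ⟨y, hydef⟩ : ∃ y : ℤ → ℝ, ∀ i, y i = C i - b i := ⟨_, fun _ => rfl⟩
  obtain ⟨z, hzdef⟩ : ∃ z : ℤ → ℝ, ∀ i, z i = D i - c i := ⟨_, fun _ => rfl⟩
  have hy : ∀ i, y i = max (C i + a i - 1) 0 := fun i => by
    rw [hydef, hbi, sub_min', sub_self]; congr 1; ring
  have hz : ∀ i, z i = max (D i + a i - 1) 0 := fun i => by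
    rw [hzdef, hci, sub_min', sub_self]; congr 1; ring
  have hynn : ∀ i, 0 ≤ y i := fun i => by rw [hy]; exact le_max_right _ _
  have hznn : ∀ i, 0 ≤ z i := fun i => by rw [hz]; exact le_max_right _ _
  have hyzero : ∀ i, i ≤ -N ∨ N < i → y i = 0 := fun i hi => by
    have hCi : C i = 0 := by rcases hi with hh | hh; exacts [hC0 i hh, hCN i (by omega)]
    have hai : a i = 0 := (hw i (by omega)).1
    rw [hy, hCi, hai]; norm_num
  have hzzero : ∀ i, i < -N ∨ N ≤ i → z i = 0 := fun i hi => by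
    have hDi : D i = 0 := by rcases hi with hh | hh; exacts [hD0 i (by omega), hDhigh i hh]
    have hai : a i = 0 := (hw i (by omega)).1
    rw [hz, hDi, hai]; norm_num
  have hCIci : ∀ i, C i = (∑ᶠ j ∈ Ici i, b j) - ∑ᶠ j ∈ Ici i, a j := fun i => by
    have s1 := sum_split ha i
    have s2 := sum_split hb i
    have s3 : C i = (∑ᶠ j ∈ Iio i, a j) - ∑ᶠ j ∈ Iio i, b j := by
      rw [hCdef]; exact sum_sub ha hb _
    linarith [hmb]
  have hzIci : ∀ i, z i = (∑ᶠ j ∈ Ioi i, a j) - ∑ᶠ j ∈ Ici i, c j := fun i => by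
    have s4 : D i = (∑ᶠ j ∈ Ioi i, a j) - ∑ᶠ j ∈ Ioi i, c j := by
      rw [hDdef]; exact sum_sub ha hc _
    have s6 := sum_Ici_eq hc i
    rw [hzdef]; linarith
  have hyIci : ∀ i, y i = (∑ᶠ j ∈ Ioi i, b j) - ∑ᶠ j ∈ Ici i, a j := fun i => by
    have s5 := sum_Ici_eq hb i
    have h1 := hCIci i
    rw [hydef]; linarith
  have hXval : ∀ i, (∑ᶠ j ∈ Ici i, (b j - c j)) = C i + a i + z i := fun i => by
    have e3 : ∑ᶠ j ∈ Ici i, (b j - c j) = (∑ᶠ j ∈ Ici i, b j) - ∑ᶠ j ∈ Ici i, c j :=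
      sum_sub hb hc _
    have s5 := sum_Ici_eq ha i
    have h1 := hCIci i
    have h2 := hzIci i
    linarith
  have key1 : ∀ k, 0 < z k → z k = z (k+1) + (a k + a (k+1) - 1) := fun k hk => by
    have hck : c k = 1 - a k := by
      rcases min_cases (1 - a k) (D k) with hh | hh
      · rw [hci k, hh.1]
      · exfalso
        have h2 : z k = 0 := by rw [hzdef, hci k, hh.1, sub_self]
        linarith
    have h1 := hDrec k
    have e1 := hzdef k
    have e2 := hzdef (k+1)
    linarith
  have key2 : ∀ k, y k + (a k + a (k+1) - 1) ≤ y (k+1) := fun k => by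
    have h1 := hCrec k
    have h2 : b (k+1) ≤ 1 - a (k+1) := by rw [hbi]; exact min_le_left _ _
    have e1 := hydef k
    have e2 := hydef (k+1)
    linarith
  have key2' : ∀ k, 0 < y (k+1) → y (k+1) = y k + (a k + a (k+1) - 1) := fun k hk => by
    have hbk : b (k+1) = 1 - a (k+1) := by
      rcases min_cases (1 - a (k+1)) (C (k+1)) with hh | hh
      · rw [hbi, hh.1]
      · exfalso
        have h2 : y (k+1) = 0 := by rw [hydef, hbi, hh.1, sub_self]
        linarith
    have h1 := hCrec k
    have e1 := hydef k
    have e2 := hydef (k+1)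
    linarith
  have hVzero : ∀ i, i < -N ∨ N < i → a i + a (i+1) = 0 := fun i hi => by
    have h1 : a i = 0 := (hw i (by omega)).1
    have h2 : a (i+1) = 0 := (hw (i+1) (by omega)).1
    rw [h1, h2, add_zero]
  obtain ⟨iV, hiV⟩ := exists_max (fun i => a i + a (i+1)) N hNpos hVzero
  have bddV : BddAbove (range fun i : ℤ => a i + a (i+1)) :=
    ⟨a iV + a (iV+1), by rintro _ ⟨i, rfl⟩; exact hiV i⟩
  have Ec : (∃ i, 0 < (∑ᶠ j ∈ Ioi i, a j) - ∑ᶠ j ∈ Ici i, c j) ↔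
      1 < ⨆ i : ℤ, (a i + a (i+1)) := by
    constructor
    · rintro ⟨i, hi⟩
      rw [← hzIci i] at hi
      have claim : ∀ n : ℕ, ∀ k : ℤ, N ≤ k + n → 0 < z k →
          1 < ⨆ i : ℤ, (a i + a (i+1)) := by
        intro n
        induction n with
        | zero =>
          intro k hk hzk
          exfalso
          have h0 : z k = 0 := hzzero k (Or.inr (by push_cast at hk; omega))
          linarith
        | succ n ih =>
          intro k hk hzk
          by_cases hz1 : 0 < z (k+1)
          · exact ih (k+1) (by push_cast at hk ⊢; omega) hz1
          · have hz10 : z (k+1) = 0 := le_antisymm (by linarith) (hznn _)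
            have h1 := key1 k hzk
            rw [hz10] at h1
            calc (1:ℝ) < a k + a (k+1) := by linarith
              _ ≤ ⨆ i : ℤ, (a i + a (i+1)) := le_ciSup bddV k
      exact claim (N - i).toNat i (by omega) hi
    · intro hV
      obtain ⟨i1, hi1⟩ : ∃ i1, 1 < a i1 + a (i1+1) := by
        by_contra hcon
        push_neg at hcon
        exact absurd (ciSup_le hcon) (by linarith)
      refine ⟨i1, ?_⟩
      rw [← hzIci i1]
      have hD1 : a (i1+1) ≤ D i1 := by
        have h1 := hDrec i1
        have h2 : c (i1+1) ≤ D (i1+1) := by rw [hci]; exact min_le_right _ _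
        linarith
      have h3 : D i1 + a i1 - 1 ≤ z i1 := by rw [hz]; exact le_max_left _ _
      linarith
  have Eb : (∃ i, 0 < (∑ᶠ j ∈ Ioi i, b j) - ∑ᶠ j ∈ Ici i, a j) ↔
      1 < ⨆ i : ℤ, (a i + a (i+1)) := by
    constructor
    · rintro ⟨i, hi⟩
      rw [← hyIci i] at hi
      have claim : ∀ n : ℕ, ∀ k : ℤ, k ≤ -N + n → 0 < y k →
          1 < ⨆ i : ℤ, (a i + a (i+1)) := by
        intro n
        induction n with
        | zero =>
          intro k hk hyk
          exfalso
          have h0 : y k = 0 := hyzero k (Or.inl (by push_cast at hk; omega))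
          linarith
        | succ n ih =>
          intro k hk hyk
          by_cases hy1 : 0 < y (k-1)
          · exact ih (k-1) (by push_cast at hk ⊢; omega) hy1
          · have hy10 : y (k-1) = 0 := le_antisymm (by linarith) (hynn _)
            have h1 := key2' (k-1)
            rw [show k - 1 + 1 = k by ring] at h1
            have h1 := h1 hyk
            rw [hy10] at h1
            calc (1:ℝ) < a (k-1) + a (k-1+1) := by
                  rw [show k-1+1 = k by ring]; linarith
              _ ≤ ⨆ i : ℤ, (a i + a (i+1)) := le_ciSup bddV (k-1)
      exact claim (i + N).toNat i (by omega) hi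
    · intro hV
      obtain ⟨i1, hi1⟩ : ∃ i1, 1 < a i1 + a (i1+1) := by
        by_contra hcon
        push_neg at hcon
        exact absurd (ciSup_le hcon) (by linarith)
      refine ⟨i1 + 1, ?_⟩
      rw [← hyIci (i1+1)]
      have hC1 : a i1 ≤ C (i1+1) := by
        have h1 := hCrec i1
        have h2 : b i1 ≤ C i1 := by rw [hbi]; exact min_le_right _ _
        linarith
      have h3 : C (i1+1) + a (i1+1) - 1 ≤ y (i1+1) := by rw [hy]; exact le_max_left _ _
      linarith
  refine ⟨Ec, Eb, fun hV => ?_⟩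
  obtain ⟨i0, hi0⟩ := exists_max y N hNpos fun i hi => hyzero i (by omega)
  have hM0 : 0 ≤ y i0 := hynn i0
  have claim14 : ∀ n : ℕ, ∀ k : ℤ, N ≤ k + n → y k + z k ≤ y i0 := by
    intro n
    induction n with
    | zero =>
      intro k hk
      have h0 : z k = 0 := hzzero k (Or.inr (by push_cast at hk; omega))
      rw [h0, add_zero]; exact hi0 k
    | succ n ih =>
      intro k hk
      by_cases hzk : 0 < z k
      · have h1 := key1 k hzk
        have h2 := key2 k
        have h3 := ih (k+1) (by push_cast at hk ⊢; omega)
        linarith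
      · have h0 : z k = 0 := le_antisymm (by linarith) (hznn k)
        rw [h0, add_zero]; exact hi0 k
  have claim14' : ∀ k, y k + z k ≤ y i0 := fun k => claim14 (N - k).toNat k (by omega)
  have upper : ∀ i, (∑ᶠ j ∈ Ici i, (b j - c j)) ≤ 1 + y i0 := fun i => by
    have h1 := hXval i
    have h2 : C i + a i - 1 ≤ y i := by rw [hy]; exact le_max_left _ _
    have h3 := claim14' i
    linarith
  have lower : ∃ iw, 1 + y i0 ≤ ∑ᶠ j ∈ Ici iw, (b j - c j) := by
    by_cases hM : 0 < y i0
    · refine ⟨i0, ?_⟩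
      have h1 : y i0 = C i0 + a i0 - 1 := by
        rcases max_cases (C i0 + a i0 - 1) (0:ℝ) with hh | hh
        · rw [hy]; exact hh.1
        · exfalso; rw [hy i0, hh.1] at hM; exact lt_irrefl _ hM
      have h2 := hXval i0
      have h3 := hznn i0
      linarith
    · have hM0' : y i0 = 0 := le_antisymm (by linarith) hM0
      obtain ⟨i1, hi1⟩ : ∃ i1, 1 < a i1 + a (i1+1) := by
        by_contra hcon
        push_neg at hcon
        exact absurd (ciSup_le hcon) (by linarith)
      refine ⟨i1+1, ?_⟩
      have hC1 : a i1 ≤ C (i1+1) := by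
        have h1 := hCrec i1
        have h2 : b i1 ≤ C i1 := by rw [hbi]; exact min_le_right _ _
        linarith
      have h2 := hXval (i1+1)
      have h3 := hznn (i1+1)
      rw [hM0']
      linarith
  obtain ⟨iw, hiw⟩ := lower
  have hsupX : (⨆ i : ℤ, ∑ᶠ j ∈ Ici i, (b j - c j)) = 1 + y i0 := by
    refine le_antisymm (ciSup_le upper) ?_
    calc (1 : ℝ) + y i0 ≤ ∑ᶠ j ∈ Ici iw, (b j - c j) := hiw
      _ ≤ ⨆ i : ℤ, ∑ᶠ j ∈ Ici i, (b j - c j) :=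
        le_ciSup ⟨1 + y i0, by rintro _ ⟨i, rfl⟩; exact upper i⟩ iw
  have hsupy : (⨆ i : ℤ, ((∑ᶠ j ∈ Ioi i, b j) - ∑ᶠ j ∈ Ici i, a j)) = y i0 := by
    have he : (⨆ i : ℤ, ((∑ᶠ j ∈ Ioi i, b j) - ∑ᶠ j ∈ Ici i, a j)) = ⨆ i : ℤ, y i :=
      iSup_congr fun i => (hyIci i).symm
    rw [he]
    exact ciSup_eq_max y i0 hi0
  rw [hsupX, hsupy]

theorem main_mirror (a b c : ℤ → ℝ) (ha : (support a).Finite) (hb : (support b).Finite)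
    (hc : (support c).Finite)
    (hub : ∀ i, b i = min (1 - a i) (∑ᶠ j ∈ Set.Iio i, (a j - b j)))
    (hdc : ∀ i, c i = min (1 - a i) (∑ᶠ j ∈ Set.Ioi i, (a j - c j)))
    (hV : 1 < ⨆ i : ℤ, (a i + a (i+1))) :
    (⨆ i : ℤ, ∑ᶠ j ∈ Set.Ici i, (b j - c j)) =
      1 + ⨆ i : ℤ, ((∑ᶠ j ∈ Set.Ioi i, a j) - ∑ᶠ j ∈ Set.Ici i, c j) := by
  have hA := support_neg_comp a ha
  have hB := support_neg_comp c hc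
  have hCc := support_neg_comp b hb
  have hinj : ∀ s : Set ℤ, Set.InjOn Neg.neg s := fun s x _ y _ hxy => by omega
  have hubAB : ∀ k : ℤ, c (-k) = min (1 - a (-k)) (∑ᶠ j ∈ Iio k, (a (-j) - c (-j))) := by
    intro k
    rw [hdc (-k)]
    congr 1
    rw [← Set.image_neg_Iio, finsum_mem_image (hinj _)]
  have hdcAC : ∀ k : ℤ, b (-k) = min (1 - a (-k)) (∑ᶠ j ∈ Ioi k, (a (-j) - b (-j))) := by
    intro k
    rw [hub (-k)]
    congr 1
    rw [← Set.image_neg_Ioi, finsum_mem_image (hinj _)]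
  have hVA : 1 < ⨆ k : ℤ, (a (-k) + a (-(k+1))) := by
    have hr : (Set.range fun k : ℤ => a (-k) + a (-(k+1))) =
        Set.range fun i : ℤ => a i + a (i+1) := by
      ext r
      constructor
      · rintro ⟨k, rfl⟩
        refine ⟨-(k+1), ?_⟩
        beta_reduce
        rw [show (-(k+1) : ℤ) + 1 = -k by ring]
        ring
      · rintro ⟨i, rfl⟩
        refine ⟨-(i+1), ?_⟩
        beta_reduce
        rw [show (-(-(i+1)) : ℤ) = i + 1 by ring, show (-(-(i+1)+1) : ℤ) = i by ring]
        ring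
    rw [iSup_range_congr _ _ hr]
    exact hV
  have hres : (⨆ k : ℤ, ∑ᶠ j ∈ Ici k, (c (-j) - b (-j))) =
      1 + ⨆ k : ℤ, ((∑ᶠ j ∈ Ioi k, c (-j)) - ∑ᶠ j ∈ Ici k, a (-j)) :=
    (master (fun k => a (-k)) (fun k => c (-k)) (fun k => b (-k))
      hA hB hCc hubAB hdcAC).2.2 hVA
  have inner1 : ∀ k : ℤ, (∑ᶠ j ∈ Ici k, (c (-j) - b (-j))) =
      ∑ᶠ j ∈ Ici (-k+1), (b j - c j) := by
    intro k
    have h1 : (∑ᶠ j ∈ Ici k, (c (-j) - b (-j))) = ∑ᶠ j ∈ Iic (-k), (c j - b j) := by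
      rw [← Set.image_neg_Ici, finsum_mem_image (hinj _)]
    have h2 : Iic (-k) = Iio (-k+1) := by ext x; simp
    have hscb := support_sub hc hb
    have h3 := sum_split hscb (-k+1)
    have h4 : ∑ᶠ j, (c j - b j) = 0 := by
      rw [finsum_sub_distrib hc hb, massc a c ha hc hdc, massb a b ha hb hub]
      ring
    have h5 : ∑ᶠ j ∈ Ici (-k+1), (c j - b j) =
        (∑ᶠ j ∈ Ici (-k+1), c j) - ∑ᶠ j ∈ Ici (-k+1), b j := sum_sub hc hb _
    have h6 : ∑ᶠ j ∈ Ici (-k+1), (b j - c j) =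
        (∑ᶠ j ∈ Ici (-k+1), b j) - ∑ᶠ j ∈ Ici (-k+1), c j := sum_sub hb hc _
    rw [h1, h2]
    linarith
  have inner2 : ∀ k : ℤ, ((∑ᶠ j ∈ Ioi k, c (-j)) - ∑ᶠ j ∈ Ici k, a (-j)) =
      (∑ᶠ j ∈ Ioi (-k), a j) - ∑ᶠ j ∈ Ici (-k), c j := by
    intro k
    have h1 : (∑ᶠ j ∈ Ioi k, c (-j)) = ∑ᶠ j ∈ Iio (-k), c j := by
      rw [← Set.image_neg_Ioi, finsum_mem_image (hinj _)]
    have h2 : (∑ᶠ j ∈ Ici k, a (-j)) = ∑ᶠ j ∈ Iic (-k), a j := by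
      rw [← Set.image_neg_Ici, finsum_mem_image (hinj _)]
    have h3 := sum_split hc (-k)
    have h4 : Iic (-k) = Iio (-k+1) := by ext x; simp
    have h5 := sum_split ha (-k+1)
    have h7 : Ici (-k+1) = Ioi (-k) := by ext x; simp
    have h9 := massc a c ha hc hdc
    rw [h7] at h5
    rw [h1, h2, h4]
    linarith
  have hL : (⨆ k : ℤ, ∑ᶠ j ∈ Ici k, (c (-j) - b (-j))) =
      ⨆ i : ℤ, ∑ᶠ j ∈ Ici i, (b j - c j) := by
    apply iSup_range_congr
    ext r
    constructor
    · rintro ⟨k, rfl⟩; exact ⟨-k+1, (inner1 k).symm⟩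
    · rintro ⟨i, rfl⟩
      refine ⟨-i+1, ?_⟩
      beta_reduce
      rw [inner1 (-i+1), show (-(-i+1)+1 : ℤ) = i by ring]
  have hR : (⨆ k : ℤ, ((∑ᶠ j ∈ Ioi k, c (-j)) - ∑ᶠ j ∈ Ici k, a (-j))) =
      ⨆ i : ℤ, ((∑ᶠ j ∈ Ioi i, a j) - ∑ᶠ j ∈ Ici i, c j) := by
    apply iSup_range_congr
    ext r
    constructor
    · rintro ⟨k, rfl⟩; exact ⟨-k, (inner2 k).symm⟩
    · rintro ⟨i, rfl⟩
      refine ⟨-i, ?_⟩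
      beta_reduce
      rw [inner2 (-i), neg_neg]
  rw [hL, hR] at hres
  exact hres

end Stmt8

open Stmt8 in
/-- For a finitely supported udKdV solution with `V^t > 1`,
`max_i X^t_i = 1 + max_i Y^{t+1}_i`. Combined with `max_i X^t_i = 1 + max_i Y^t_i`,
this implies that `max_i Y^t_i` and `max_i X^t_i` are independent of `t`. -/
theorem stmt_8 (U : ℤ → ℤ → ℝ)
    (hfin : ∀ t, (Function.support (U t)).Finite)
    (hup : ∀ t i, U (t + 1) i =
      min (1 - U t i) (∑ᶠ j ∈ Set.Iio i, (U t j - U (t + 1) j)))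
    (hdown : ∀ t i, U (t - 1) i =
      min (1 - U t i) (∑ᶠ j ∈ Set.Ioi i, (U t j - U (t - 1) j)))
    (X Y : ℤ → ℤ → ℝ)
    (hX : ∀ t i, X t i = ∑ᶠ j ∈ Set.Ici i, (U (t + 1) j - U (t - 1) j))
    (hY : ∀ t i, Y t i = (∑ᶠ j ∈ Set.Ioi i, U t j) - ∑ᶠ j ∈ Set.Ici i, U (t - 1) j)
    (t : ℤ) (hV : 1 < ⨆ i : ℤ, (U t i + U t (i + 1))) :
    ((⨆ i : ℤ, X t i) = 1 + ⨆ i : ℤ, Y (t + 1) i) ∧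
    (∀ s s' : ℤ, (⨆ i : ℤ, X s i) = ⨆ i : ℤ, X s' i) ∧
    (∀ s s' : ℤ, (⨆ i : ℤ, Y s i) = ⨆ i : ℤ, Y s' i) := by
  have hEc : ∀ s : ℤ, (∃ i, 0 < (∑ᶠ j ∈ Set.Ioi i, U s j) - ∑ᶠ j ∈ Set.Ici i, U (s-1) j) ↔
      1 < ⨆ i : ℤ, (U s i + U s (i+1)) := fun s =>
    (master (U s) (U (s+1)) (U (s-1)) (hfin s) (hfin (s+1)) (hfin (s-1))
      (hup s) (hdown s)).1
  have hEb : ∀ s : ℤ, (∃ i, 0 < (∑ᶠ j ∈ Set.Ioi i, U (s+1) j) - ∑ᶠ j ∈ Set.Ici i, U s j) ↔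
      1 < ⨆ i : ℤ, (U s i + U s (i+1)) := fun s =>
    (master (U s) (U (s+1)) (U (s-1)) (hfin s) (hfin (s+1)) (hfin (s-1))
      (hup s) (hdown s)).2.1
  have hmain : ∀ s : ℤ, 1 < (⨆ i : ℤ, (U s i + U s (i+1))) →
      (⨆ i : ℤ, ∑ᶠ j ∈ Set.Ici i, (U (s+1) j - U (s-1) j)) =
        1 + ⨆ i : ℤ, ((∑ᶠ j ∈ Set.Ioi i, U (s+1) j) - ∑ᶠ j ∈ Set.Ici i, U s j) := fun s =>
    (master (U s) (U (s+1)) (U (s-1)) (hfin s) (hfin (s+1)) (hfin (s-1))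
      (hup s) (hdown s)).2.2
  have hmirror : ∀ s : ℤ, 1 < (⨆ i : ℤ, (U s i + U s (i+1))) →
      (⨆ i : ℤ, ∑ᶠ j ∈ Set.Ici i, (U (s+1) j - U (s-1) j)) =
        1 + ⨆ i : ℤ, ((∑ᶠ j ∈ Set.Ioi i, U s j) - ∑ᶠ j ∈ Set.Ici i, U (s-1) j) := fun s =>
    main_mirror (U s) (U (s+1)) (U (s-1)) (hfin s) (hfin (s+1)) (hfin (s-1))
      (hup s) (hdown s)
  have hVup : ∀ s : ℤ, 1 < (⨆ i : ℤ, (U s i + U s (i+1))) →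
      1 < ⨆ i : ℤ, (U (s+1) i + U (s+1) (i+1)) := by
    intro s hs
    have h1 := (hEb s).mpr hs
    have h2 := hEc (s+1)
    rw [show s+1-1 = s by ring] at h2
    exact h2.mp h1
  have hVdown : ∀ s : ℤ, 1 < (⨆ i : ℤ, (U s i + U s (i+1))) →
      1 < ⨆ i : ℤ, (U (s-1) i + U (s-1) (i+1)) := by
    intro s hs
    have h1 := (hEc s).mpr hs
    have h2 := hEb (s-1)
    rw [show s-1+1 = s by ring] at h2
    exact h2.mp h1
  have hVall : ∀ s : ℤ, 1 < ⨆ i : ℤ, (U s i + U s (i+1)) := by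
    intro s
    have key : ∀ n : ℤ, 1 < ⨆ i : ℤ, (U (t + n) i + U (t + n) (i+1)) := by
      intro n
      induction n using Int.induction_on with
      | zero => simpa using hV
      | succ k ih =>
        have h1 := hVup (t + k) ih
        rwa [show t + (k:ℤ) + 1 = t + ((k:ℤ)+1) by ring] at h1
      | pred k ih =>
        have h1 := hVdown (t + -(k:ℤ)) ih
        rwa [show t + -(k:ℤ) - 1 = t + (-(k:ℤ)-1) by ring] at h1
    have h1 := key (s - t)
    rwa [show t + (s - t) = s by ring] at h1
  have hXs : ∀ s : ℤ, (⨆ i : ℤ, X s i) = 1 + ⨆ i : ℤ, Y (s+1) i := by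
    intro s
    have h1 := hmain s (hVall s)
    have h2 : (⨆ i : ℤ, X s i) =
        ⨆ i : ℤ, ∑ᶠ j ∈ Set.Ici i, (U (s+1) j - U (s-1) j) := iSup_congr fun i => hX s i
    have h3 : (⨆ i : ℤ, Y (s+1) i) =
        ⨆ i : ℤ, ((∑ᶠ j ∈ Set.Ioi i, U (s+1) j) - ∑ᶠ j ∈ Set.Ici i, U s j) := by
      refine iSup_congr fun i => ?_
      rw [hY (s+1) i, show s+1-1 = s by ring]
    rw [h2, h3]
    exact h1
  have hXsm : ∀ s : ℤ, (⨆ i : ℤ, X s i) = 1 + ⨆ i : ℤ, Y s i := by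
    intro s
    have h1 := hmirror s (hVall s)
    have h2 : (⨆ i : ℤ, X s i) =
        ⨆ i : ℤ, ∑ᶠ j ∈ Set.Ici i, (U (s+1) j - U (s-1) j) := iSup_congr fun i => hX s i
    have h3 : (⨆ i : ℤ, Y s i) =
        ⨆ i : ℤ, ((∑ᶠ j ∈ Set.Ioi i, U s j) - ∑ᶠ j ∈ Set.Ici i, U (s-1) j) :=
      iSup_congr fun i => hY s i
    rw [h2, h3]
    exact h1
  have hYstep : ∀ s : ℤ, (⨆ i : ℤ, Y (s+1) i) = ⨆ i : ℤ, Y s i := by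
    intro s
    have h1 := (hXs s).symm.trans (hXsm s)
    linarith
  have hYconst : ∀ s s' : ℤ, (⨆ i : ℤ, Y s i) = ⨆ i : ℤ, Y s' i := by
    have base : ∀ s : ℤ, (⨆ i : ℤ, Y s i) = ⨆ i : ℤ, Y 0 i := by
      intro s
      induction s using Int.induction_on with
      | zero => rfl
      | succ k ih => rw [← ih]; exact hYstep k
      | pred k ih =>
        rw [← ih]
        have h1 := hYstep (-(k:ℤ)-1)
        rw [show -(k:ℤ)-1+1 = -(k:ℤ) by ring] at h1
        exact h1.symm
    intro s s'
    rw [base s, base s']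
  refine ⟨hXs t, ?_, hYconst⟩
  intro s s'
  rw [hXsm s, hXsm s', hYconst s s']
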